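/- Let S and T be densely defined closed operators from H₁ to H₂ with Γ(S) ⊆ Γ(T) (i.e. D(S) ⊆ D(T) and T extends S). For ξ ∈ H₁ let η_S(ξ) and η_T(ξ) denote the first components of the orthogonal projections of (ξ,0) onto Γ(S) and onto Γ(T), respectively. Then for every ξ ∈ H₁ the inner products ⟨ξ, η_S(ξ)⟩ and ⟨ξ, η_T(ξ)⟩ are real and satisfy 0 ≤ ⟨ξ, η_S(ξ)⟩ ≤ ⟨ξ, η_T(ξ)⟩; equivalently, (1 + S*S)⁻¹ ≤ (1 + T*T)⁻¹ as bounded positive operators on H₁. -/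

import Mathlib

/-- let `S` and `T` be densely defined closed operators from `H₁` to `H₂`
with `Γ(S) ⊆ Γ(T)`. For `ξ ∈ H₁`, let `ηS` resp. `ηT` denote the first component of the
orthogonal projection of `(ξ,0)` onto `Γ(S)` resp. `Γ(T)` (characterized by the
orthogonality relations below, where orthogonality in `H₁ ⊕ H₂` means that the sum of the
componentwise inner ℂ products vanishes). Then `⟨ξ, ηS⟩` and `⟨ξ, ηT⟩` are real and
`0 ≤ ⟨ξ, ηS⟩ ≤ ⟨ξ, ηT⟩`; equivalently `(1 + S*S)⁻¹ ≤ (1 + T*T)⁻¹`. -/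
theorem statement11 {H₁ H₂ : Type*}
    [NormedAddCommGroup H₁] [InnerProductSpace ℂ H₁] [CompleteSpace H₁]
    [NormedAddCommGroup H₂] [InnerProductSpace ℂ H₂] [CompleteSpace H₂]
    (S T : H₁ →ₗ.[ℂ] H₂)
    (hSdense : Dense (S.domain : Set H₁)) (hSclosed : IsClosed (S.graph : Set (H₁ × H₂)))
    (hTdense : Dense (T.domain : Set H₁)) (hTclosed : IsClosed (T.graph : Set (H₁ × H₂)))
    (hST : S.graph ≤ T.graph)
    (ξ ηS ηT : H₁) (hηS : ηS ∈ S.domain) (hηT : ηT ∈ T.domain)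
    (hprojS : ∀ u : H₁, ∀ hu : u ∈ S.domain,
      (inner ℂ (ξ - ηS) u : ℂ) + (inner ℂ ((0 : H₂) - S ⟨ηS, hηS⟩) (S ⟨u, hu⟩) : ℂ) = 0)
    (hprojT : ∀ u : H₁, ∀ hu : u ∈ T.domain,
      (inner ℂ (ξ - ηT) u : ℂ) + (inner ℂ ((0 : H₂) - T ⟨ηT, hηT⟩) (T ⟨u, hu⟩) : ℂ) = 0) :
    ∃ rS rT : ℝ, (inner ℂ ξ ηS : ℂ) = (rS : ℂ) ∧ (inner ℂ ξ ηT : ℂ) = (rT : ℂ) ∧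
      0 ≤ rS ∧ rS ≤ rT := by
  classical
  -- ηS belongs to T.domain and T agrees with S there
  have hmemT : ((ηS : H₁), S ⟨ηS, hηS⟩) ∈ T.graph := hST (S.mem_graph ⟨ηS, hηS⟩)
  rw [LinearPMap.mem_graph_iff] at hmemT
  obtain ⟨u, hu1, hu2⟩ := hmemT
  have hu1' : (u : H₁) = ηS := hu1
  have huT : ηS ∈ T.domain := hu1' ▸ u.2
  have hTval : T ⟨ηS, huT⟩ = S ⟨ηS, hηS⟩ := by
    have : u = ⟨ηS, huT⟩ := Subtype.ext hu1
    rw [← this, hu2]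
  -- work in the ℓ² product
  set E := WithLp 2 (H₁ × H₂) with hE
  let e := (WithLp.equiv 2 (H₁ × H₂)).symm
  let v : E := e (ξ, 0)
  let a : E := e (ηS, S ⟨ηS, hηS⟩)
  let b : E := e (ηT, T ⟨ηT, hηT⟩)
  have hva : (inner ℂ v a : ℂ) = inner ℂ a a := by
    have expand : (inner ℂ (v - a) a : ℂ)
        = (inner ℂ (ξ - ηS) ηS : ℂ) + (inner ℂ ((0 : H₂) - S ⟨ηS, hηS⟩) (S ⟨ηS, hηS⟩) : ℂ) := rfl
    have h0 : (inner ℂ (v - a) a : ℂ) = 0 := expand.trans (hprojS ηS hηS)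
    rw [inner_sub_left] at h0
    linear_combination h0
  have hvb : (inner ℂ v b : ℂ) = inner ℂ b b := by
    have expand : (inner ℂ (v - b) b : ℂ)
        = (inner ℂ (ξ - ηT) ηT : ℂ) + (inner ℂ ((0 : H₂) - T ⟨ηT, hηT⟩) (T ⟨ηT, hηT⟩) : ℂ) := rfl
    have h0 : (inner ℂ (v - b) b : ℂ) = 0 := expand.trans (hprojT ηT hηT)
    rw [inner_sub_left] at h0
    linear_combination h0
  have hba : (inner ℂ v a : ℂ) = inner ℂ b a := by
    have h := hprojT ηS huT
    rw [hTval] at h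
    have expand : (inner ℂ (v - b) a : ℂ)
        = (inner ℂ (ξ - ηT) ηS : ℂ) + (inner ℂ ((0 : H₂) - T ⟨ηT, hηT⟩) (S ⟨ηS, hηS⟩) : ℂ) := rfl
    have h0 : (inner ℂ (v - b) a : ℂ) = 0 := expand.trans h
    rw [inner_sub_left] at h0
    linear_combination h0
  have hξa : (inner ℂ ξ ηS : ℂ) = inner ℂ v a := by
    have : (inner ℂ v a : ℂ) = (inner ℂ ξ ηS : ℂ) + (inner ℂ (0 : H₂) (S ⟨ηS, hηS⟩) : ℂ) := rfl
    rw [this, inner_zero_left, add_zero]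
  have hξb : (inner ℂ ξ ηT : ℂ) = inner ℂ v b := by
    have : (inner ℂ v b : ℂ) = (inner ℂ ξ ηT : ℂ) + (inner ℂ (0 : H₂) (T ⟨ηT, hηT⟩) : ℂ) := rfl
    rw [this, inner_zero_left, add_zero]
  refine ⟨‖a‖ ^ 2, ‖b‖ ^ 2, ?_, ?_, sq_nonneg _, ?_⟩
  · rw [hξa, hva, inner_self_eq_norm_sq_to_K]; push_cast; rfl
  · rw [hξb, hvb, inner_self_eq_norm_sq_to_K]; push_cast; rfl
  · -- ‖a‖² = re ⟨b,a⟩ ≤ ‖b‖‖a‖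
    have key : ‖a‖ ^ 2 ≤ ‖b‖ * ‖a‖ := by
      have h1 : (inner ℂ a a : ℂ) = inner ℂ b a := by rw [← hva, hba]
      have h2 : (‖a‖ ^ 2 : ℝ) = Complex.re (inner ℂ b a : ℂ) := by
        rw [← h1, inner_self_eq_norm_sq_to_K]
        simp [← Complex.ofReal_pow]
      calc ‖a‖ ^ 2 = Complex.re (inner ℂ b a : ℂ) := h2
        _ ≤ ‖(inner ℂ b a : ℂ)‖ := Complex.re_le_norm _
        _ ≤ ‖b‖ * ‖a‖ := norm_inner_le_norm b a
    nlinarith [key, sq_nonneg (‖a‖ - ‖b‖)]
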